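/- For the DDPM forward process (λₙ² = β̃ₙ := (β̄_{n−1}/β̄ₙ) βₙ), the optimal reverse variance satisfies β̃ₙ ≤ σₙ*² ≤ βₙ/αₙ; if furthermore the data distribution q(x₀) is supported in [a, b]^d, then also σₙ*² ≤ β̃ₙ + (ᾱ_{n−1} βₙ²/β̄ₙ²) ((b − a)/2)². -/

import Mathlib

open MeasureTheory Finset

/-- Isotropic Gaussian density `N(μ, s·I)` on `ℝ^d`. -/
noncomputable def gaussIso (d : ℕ) (μ : Fin d → ℝ) (s : ℝ) (x : Fin d → ℝ) : ℝ :=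
  (2 * Real.pi * s) ^ (-(d : ℝ) / 2) * Real.exp (-(∑ i, (x i - μ i) ^ 2) / (2 * s))

/-- `ᾱₙ = ∏_{i=1}^n (1 − βᵢ)`. -/
noncomputable def alphaBar (β : ℕ → ℝ) (n : ℕ) : ℝ := ∏ i ∈ Finset.Icc 1 n, (1 - β i)

/-- `β̄ₙ = 1 − ᾱₙ`. -/
noncomputable def betaBar (β : ℕ → ℝ) (n : ℕ) : ℝ := 1 - alphaBar β n

/-- `β̃ₙ = (β̄_{n−1}/β̄ₙ) βₙ`. -/
noncomputable def betaTilde (β : ℕ → ℝ) (n : ℕ) : ℝ :=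
  betaBar β (n - 1) / betaBar β n * β n

/-- Joint density of `(x₀, xₙ)`, using the DDPM marginal `q(xₙ|x₀) = N(√ᾱₙ x₀, β̄ₙ I)`. -/
noncomputable def joint0n (d : ℕ) (β : ℕ → ℝ) (q0 : (Fin d → ℝ) → ℝ) (n : ℕ)
    (x0 xn : Fin d → ℝ) : ℝ :=
  q0 x0 * gaussIso d (fun i => Real.sqrt (alphaBar β n) * x0 i) (betaBar β n) xn

/-- Marginal density `qₙ(xₙ)`. -/
noncomputable def margN (d : ℕ) (β : ℕ → ℝ) (q0 : (Fin d → ℝ) → ℝ) (n : ℕ)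
    (xn : Fin d → ℝ) : ℝ :=
  ∫ x0, joint0n d β q0 n x0 xn

/-- Conditional mean `E_{q(x₀|xₙ)}[x₀]`. -/
noncomputable def condMean0 (d : ℕ) (β : ℕ → ℝ) (q0 : (Fin d → ℝ) → ℝ) (n : ℕ)
    (xn : Fin d → ℝ) : Fin d → ℝ :=
  fun i => (∫ x0, joint0n d β q0 n x0 xn * x0 i) / margN d β q0 n xn

/-- `E_{qₙ(xₙ)}[tr(Cov_{q(x₀|xₙ)}[x₀])]`. -/
noncomputable def EtrCov (d : ℕ) (β : ℕ → ℝ) (q0 : (Fin d → ℝ) → ℝ) (n : ℕ) : ℝ :=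
  ∫ xn, ∫ x0, joint0n d β q0 n x0 xn * ∑ i, (x0 i - condMean0 d β q0 n xn i) ^ 2

/-- The DDPM optimal reverse variance
`σₙ*² = β̃ₙ + (ᾱ_{n−1} βₙ²/β̄ₙ²) E_{qₙ}[tr Cov_{q(x₀|xₙ)}[x₀]/d]`. -/
noncomputable def sigmaStarDDPM2 (d : ℕ) (β : ℕ → ℝ) (q0 : (Fin d → ℝ) → ℝ) (n : ℕ) : ℝ :=
  betaTilde β n + alphaBar β (n - 1) * β n ^ 2 / betaBar β n ^ 2 * (EtrCov d β q0 n / d)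


open Real


lemma int_sq_exp {b : ℝ} (hb : 0 < b) : Integrable (fun x : ℝ => x ^ 2 * Real.exp (-b * x ^ 2)) := by
  apply Integrable.mono' ((integrable_exp_neg_mul_sq (by linarith : 0 < b/2)).const_mul (2/b))
  · apply Measurable.aestronglyMeasurable; fun_prop
  · filter_upwards with x
    have h1 : (b/2) * x^2 ≤ Real.exp ((b/2) * x^2) := by
      nlinarith [Real.add_one_le_exp ((b/2)*x^2)]
    have h1' : x^2 ≤ (2/b) * Real.exp ((b/2) * x^2) := by
      have := mul_le_mul_of_nonneg_left h1 (le_of_lt (by positivity : (0:ℝ) < 2/b))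
      calc x^2 = (2/b) * ((b/2) * x^2) := by field_simp
        _ ≤ _ := this
    have h2 : Real.exp ((b/2)*x^2) * Real.exp (-b*x^2) = Real.exp (-(b/2)*x^2) := by
      rw [← Real.exp_add]; ring_nf
    have h3 : 0 < Real.exp (-b * x^2) := Real.exp_pos _
    rw [Real.norm_eq_abs, abs_of_nonneg (by positivity)]
    calc x^2 * Real.exp (-b*x^2) ≤ ((2/b) * Real.exp ((b/2)*x^2)) * Real.exp (-b*x^2) :=
          mul_le_mul_of_nonneg_right h1' h3.le
      _ = 2/b * Real.exp (-(b/2) * x^2) := by rw [mul_assoc, h2]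

lemma integral_sq_exp {b : ℝ} (hb : 0 < b) :
    ∫ x : ℝ, x ^ 2 * Real.exp (-b * x ^ 2) = Real.sqrt π * b ^ (-(3:ℝ)/2) / 2 := by
  have hIoi : ∫ x in Set.Ioi (0:ℝ), x ^ 2 * Real.exp (-b * x ^ 2)
      = b ^ (-(3:ℝ)/2) * (1/2) * Real.Gamma ((3:ℝ)/2) := by
    have h := integral_rpow_mul_exp_neg_mul_rpow (p := 2) (q := 2) (b := b)
      (by norm_num) (by norm_num) hb
    have e1 : ∫ x in Set.Ioi (0:ℝ), x ^ (2:ℝ) * Real.exp (-b * x ^ (2:ℝ))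
        = ∫ x in Set.Ioi (0:ℝ), x ^ 2 * Real.exp (-b * x ^ 2) := by
      refine setIntegral_congr_fun measurableSet_Ioi (fun x hx => ?_)
      rw [show ((2:ℝ)) = ((2:ℕ):ℝ) by norm_num, Real.rpow_natCast]
    rw [e1] at h
    rw [h]; norm_num
  have habs : ∫ x : ℝ, x ^ 2 * Real.exp (-b * x ^ 2)
      = 2 * ∫ x in Set.Ioi (0:ℝ), x ^ 2 * Real.exp (-b * x ^ 2) := by
    rw [← integral_comp_abs (f := fun x => x ^ 2 * Real.exp (-b * x ^ 2))]
    congr 1; ext x; rw [sq_abs]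
  have hGamma : Real.Gamma ((3:ℝ)/2) = Real.sqrt π / 2 := by
    rw [show ((3:ℝ)/2) = 1/2 + 1 by norm_num, Real.Gamma_add_one (by norm_num),
      Real.Gamma_one_half_eq]
    ring
  rw [habs, hIoi, hGamma]; ring

noncomputable def g1 (s c : ℝ) (t : ℝ) : ℝ :=
  (2 * π * s) ^ (-(1:ℝ)/2) * Real.exp (-(t - c)^2 / (2*s))

lemma g1_nonneg {s : ℝ} (hs : 0 < s) (c t : ℝ) : 0 ≤ g1 s c t := by
  unfold g1; positivity

lemma g1_exp_eq (s c t : ℝ) : Real.exp (-(t - c)^2 / (2*s)) = Real.exp (-(1/(2*s)) * (t-c)^2) := by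
  ring_nf

lemma g1_int {s : ℝ} (hs : 0 < s) (c : ℝ) : Integrable (g1 s c) := by
  unfold g1
  simp_rw [g1_exp_eq]
  exact (((integrable_exp_neg_mul_sq (by positivity : (0:ℝ) < 1/(2*s))).comp_sub_right c).const_mul _)

lemma g1_sq_int {s : ℝ} (hs : 0 < s) (c : ℝ) : Integrable (fun t => g1 s c t * (t - c)^2) := by
  have e : (fun t => g1 s c t * (t - c)^2)
      = fun t => (2*π*s) ^ (-(1:ℝ)/2) * ((t-c)^2 * Real.exp (-(1/(2*s)) * (t-c)^2)) := by
    funext t; unfold g1; rw [g1_exp_eq]; ring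
  rw [e]
  exact ((int_sq_exp (by positivity : (0:ℝ) < 1/(2*s))).comp_sub_right c).const_mul _

lemma g1_one {s : ℝ} (hs : 0 < s) (c : ℝ) : ∫ t, g1 s c t = 1 := by
  unfold g1
  rw [integral_const_mul]
  simp_rw [g1_exp_eq]
  rw [integral_sub_right_eq_self (fun t => Real.exp (-(1/(2*s)) * t^2)) c, integral_gaussian]
  rw [show π / (1/(2*s)) = 2*π*s by field_simp]
  rw [Real.sqrt_eq_rpow, ← Real.rpow_add (by positivity)]
  norm_num

lemma g1_mom2 {s : ℝ} (hs : 0 < s) (c : ℝ) : ∫ t, g1 s c t * (t - c)^2 = s := by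
  have h2s : (0:ℝ) < 2*s := by linarith
  have e : (fun t => g1 s c t * (t - c)^2)
      = fun t => (2*π*s) ^ (-(1:ℝ)/2) * ((t-c)^2 * Real.exp (-(1/(2*s)) * (t-c)^2)) := by
    funext t; unfold g1; rw [g1_exp_eq]; ring
  rw [e, integral_const_mul,
    integral_sub_right_eq_self (fun t => t^2 * Real.exp (-(1/(2*s)) * t^2)) c,
    integral_sq_exp (by positivity : (0:ℝ) < 1/(2*s))]
  have e1 : ((1:ℝ)/(2*s)) ^ (-(3:ℝ)/2) = (2*s) ^ ((3:ℝ)/2) := by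
    rw [one_div, Real.inv_rpow h2s.le, ← Real.rpow_neg h2s.le]; norm_num
  have e2 : ((2*π*s : ℝ)) ^ (-(1:ℝ)/2) = π ^ (-(1:ℝ)/2) * (2*s) ^ (-(1:ℝ)/2) := by
    rw [show (2*π*s : ℝ) = π * (2*s) by ring, Real.mul_rpow pi_pos.le h2s.le]
  have p1 : π ^ (-(1:ℝ)/2) * π ^ ((1:ℝ)/2) = 1 := by
    rw [← Real.rpow_add pi_pos]; norm_num
  have p2 : (2*s) ^ (-(1:ℝ)/2) * (2*s) ^ ((3:ℝ)/2) = 2*s := by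
    rw [← Real.rpow_add h2s]; norm_num
  rw [e1, e2, Real.sqrt_eq_rpow]
  calc π ^ (-(1:ℝ)/2) * (2*s) ^ (-(1:ℝ)/2) * (π ^ ((1:ℝ)/2) * (2*s) ^ ((3:ℝ)/2) / 2)
      = (π ^ (-(1:ℝ)/2) * π ^ ((1:ℝ)/2)) * ((2*s) ^ (-(1:ℝ)/2) * (2*s) ^ ((3:ℝ)/2)) / 2 := by ring
    _ = s := by rw [p1, p2]; ring

lemma gaussIso_eq_prod {d : ℕ} {s : ℝ} (hs : 0 < s) (μ : Fin d → ℝ) (x : Fin d → ℝ) :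
    gaussIso d μ s x = ∏ i, g1 s (μ i) (x i) := by
  unfold gaussIso g1
  have h2 : (0:ℝ) < 2*π*s := by positivity
  have e1 : ((2*π*s : ℝ)) ^ (-(d:ℝ)/2) = ∏ _i : Fin d, (2*π*s) ^ (-(1:ℝ)/2) := by
    rw [Finset.prod_const, ← Real.rpow_natCast ((2*π*s) ^ (-(1:ℝ)/2)) _, ← Real.rpow_mul h2.le]
    congr 1
    simp [Finset.card_univ]
    ring
  have e2 : Real.exp (-(∑ i, (x i - μ i) ^ 2) / (2*s)) = ∏ i, Real.exp (-(x i - μ i)^2 / (2*s)) := by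
    rw [← Real.exp_sum]
    congr 1
    rw [← Finset.sum_div, ← Finset.sum_neg_distrib]
  rw [e1, e2, ← Finset.prod_mul_distrib]

lemma gaussIso_nonneg {d : ℕ} {s : ℝ} (hs : 0 < s) (μ x : Fin d → ℝ) : 0 ≤ gaussIso d μ s x := by
  unfold gaussIso; positivity

lemma gaussIso_int {d : ℕ} {s : ℝ} (hs : 0 < s) (μ : Fin d → ℝ) :
    Integrable (gaussIso d μ s) := by
  have : gaussIso d μ s = fun x => ∏ i, g1 s (μ i) (x i) := funext (gaussIso_eq_prod hs μ)
  rw [this]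
  exact Integrable.fintype_prod (fun i => g1_int hs (μ i))

lemma gaussIso_one {d : ℕ} {s : ℝ} (hs : 0 < s) (μ : Fin d → ℝ) :
    ∫ x : Fin d → ℝ, gaussIso d μ s x = 1 := by
  simp_rw [gaussIso_eq_prod hs μ]
  rw [integral_fintype_prod_volume_eq_prod (f := fun i t => g1 s (μ i) t)]
  simp [g1_one hs]


noncomputable def Fij {d : ℕ} (s : ℝ) (μ : Fin d → ℝ) (i j : Fin d) (t : ℝ) : ℝ :=
  if j = i then g1 s (μ j) t * (t - μ j)^2 else g1 s (μ j) t

lemma Fij_self {d : ℕ} (s : ℝ) (μ : Fin d → ℝ) (i : Fin d) (t : ℝ) :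
    Fij s μ i i t = g1 s (μ i) t * (t - μ i)^2 := by simp [Fij]

lemma Fij_ne {d : ℕ} (s : ℝ) (μ : Fin d → ℝ) {i j : Fin d} (h : j ≠ i) (t : ℝ) :
    Fij s μ i j t = g1 s (μ j) t := by simp [Fij, h]

lemma Fij_int {d : ℕ} {s : ℝ} (hs : 0 < s) (μ : Fin d → ℝ) (i j : Fin d) :
    Integrable (Fij s μ i j) := by
  by_cases h : j = i
  · subst h; have : Fij s μ j j = fun t => g1 s (μ j) t * (t - μ j)^2 := funext (Fij_self s μ j)
    rw [this]; exact g1_sq_int hs _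
  · have : Fij s μ i j = fun t => g1 s (μ j) t := funext (Fij_ne s μ h)
    rw [this]; exact g1_int hs _

lemma prod_Fij {d : ℕ} {s : ℝ} (hs : 0 < s) (μ : Fin d → ℝ) (i : Fin d) (x : Fin d → ℝ) :
    ∏ j, Fij s μ i j (x j) = (∏ j, g1 s (μ j) (x j)) * (x i - μ i)^2 := by
  rw [← Finset.mul_prod_erase univ (fun j => Fij s μ i j (x j)) (mem_univ i),
    ← Finset.mul_prod_erase univ (fun j => g1 s (μ j) (x j)) (mem_univ i),
    Fij_self,
    Finset.prod_congr rfl (fun j hj => Fij_ne s μ (Finset.ne_of_mem_erase hj) (x j))]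
  ring

lemma integral_Fij {d : ℕ} {s : ℝ} (hs : 0 < s) (μ : Fin d → ℝ) (i : Fin d) :
    ∫ x : Fin d → ℝ, ∏ j, Fij s μ i j (x j) = s := by
  rw [integral_fintype_prod_volume_eq_prod (f := fun j => Fij s μ i j),
    ← Finset.mul_prod_erase univ _ (mem_univ i)]
  have h1 : ∫ t, Fij s μ i i t = s := by
    rw [show Fij s μ i i = fun t => g1 s (μ i) t * (t - μ i)^2 from funext (Fij_self s μ i)]
    exact g1_mom2 hs _
  have h2 : ∀ j ∈ univ.erase i, ∫ t, Fij s μ i j t = 1 := by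
    intro j hj
    rw [show Fij s μ i j = fun t => g1 s (μ j) t from funext (Fij_ne s μ (Finset.ne_of_mem_erase hj))]
    exact g1_one hs _
  rw [h1, Finset.prod_congr rfl h2]
  simp

lemma gaussIso_mom2_int {d : ℕ} {s : ℝ} (hs : 0 < s) (μ : Fin d → ℝ) :
    Integrable (fun x : Fin d → ℝ => gaussIso d μ s x * ∑ i, (x i - μ i)^2) := by
  have e : (fun x : Fin d → ℝ => gaussIso d μ s x * ∑ i, (x i - μ i)^2)
      = fun x => ∑ i, ∏ j, Fij s μ i j (x j) := by
    funext x
    rw [gaussIso_eq_prod hs μ, Finset.mul_sum]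
    exact Finset.sum_congr rfl (fun i _ => (prod_Fij hs μ i x).symm)
  rw [e]
  exact integrable_finset_sum _ (fun i _ => Integrable.fintype_prod (fun j => Fij_int hs μ i j))

lemma gaussIso_mom2 {d : ℕ} {s : ℝ} (hs : 0 < s) (μ : Fin d → ℝ) :
    ∫ x : Fin d → ℝ, gaussIso d μ s x * ∑ i, (x i - μ i)^2 = d * s := by
  have e : (fun x : Fin d → ℝ => gaussIso d μ s x * ∑ i, (x i - μ i)^2)
      = fun x => ∑ i, ∏ j, Fij s μ i j (x j) := by
    funext x
    rw [gaussIso_eq_prod hs μ, Finset.mul_sum]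
    exact Finset.sum_congr rfl (fun i _ => (prod_Fij hs μ i x).symm)
  rw [e, integral_finset_sum (μ := volume) _ (fun i _ => by exact Integrable.fintype_prod (fun j => Fij_int hs μ i j))]
  simp_rw [integral_Fij hs μ]
  simp [Finset.card_univ, mul_comm]

lemma varmin {α : Type*} [MeasurableSpace α] {ν : Measure α} (f g : α → ℝ)
    (hf0 : ∀ a, 0 ≤ f a) (hf : Integrable f ν) (hfg : Integrable (fun a => f a * g a) ν)
    (hfg2 : Integrable (fun a => f a * g a ^ 2) ν) (c : ℝ) :
    ∫ a, f a * (g a - (∫ a, f a * g a ∂ν) / (∫ a, f a ∂ν)) ^ 2 ∂ν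
      ≤ ∫ a, f a * (g a - c) ^ 2 ∂ν := by
  set M := ∫ a, f a ∂ν with hM
  set S := ∫ a, f a * g a ∂ν with hS
  have expand : ∀ e : ℝ, ∫ a, f a * (g a - e) ^ 2 ∂ν
      = (∫ a, f a * g a ^ 2 ∂ν) - 2 * e * S + e ^ 2 * M := by
    intro e
    have e1 : (fun a => f a * (g a - e) ^ 2)
        = fun a => (f a * g a ^ 2 - (2 * e) * (f a * g a)) + e ^ 2 * f a := by
      funext a; ring
    have i1 : Integrable (fun a => f a * g a ^ 2 - 2 * e * (f a * g a)) ν :=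
      hfg2.sub (hfg.const_mul _)
    have i2 : Integrable (fun a => e ^ 2 * f a) ν := hf.const_mul _
    rw [e1, integral_add i1 i2, integral_sub hfg2 (hfg.const_mul _),
      integral_const_mul, integral_const_mul]
  rw [expand, expand]
  rcases eq_or_lt_of_le (integral_nonneg (f := f) (μ := ν) hf0) with hM0 | hMpos
  · have hfz : f =ᵐ[ν] 0 := (integral_eq_zero_iff_of_nonneg hf0 hf).mp hM0.symm
    have hS0 : S = 0 := by
      rw [hS, integral_eq_zero_of_ae]
      filter_upwards [hfz] with a ha
      simp [ha]
    rw [hS0, hM, ← hM0]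
    simp
  · have hMpos' : 0 < M := by rw [hM]; exact hMpos
    have hMne : M ≠ 0 := ne_of_gt hMpos'
    have key : 0 ≤ (c * M - S) ^ 2 / M := by positivity
    have e2 : 2 * (S / M) * S - (S / M) ^ 2 * M = S ^ 2 / M := by field_simp; ring
    have e3 : (c * M - S) ^ 2 / M = c ^ 2 * M - 2 * c * S + S ^ 2 / M := by field_simp; ring
    nlinarith [key, e2, e3]

section JointLayer

variable {d : ℕ} {β : ℕ → ℝ} {q0 : (Fin d → ℝ) → ℝ} {n : ℕ}

lemma gaussIso_nonneg' {s : ℝ} (hs : 0 < s) (μ x : Fin d → ℝ) : 0 ≤ gaussIso d μ s x := by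
  unfold gaussIso; positivity

lemma gaussIso_le {s : ℝ} (hs : 0 < s) (μ x : Fin d → ℝ) :
    gaussIso d μ s x ≤ (2 * π * s) ^ (-(d:ℝ)/2) := by
  unfold gaussIso
  have h1 : Real.exp (-(∑ i, (x i - μ i) ^ 2) / (2 * s)) ≤ 1 := by
    rw [Real.exp_le_one_iff]
    apply div_nonpos_of_nonpos_of_nonneg
    · simp only [neg_nonpos]; positivity
    · positivity
  have h2 : (0:ℝ) ≤ (2 * π * s) ^ (-(d:ℝ)/2) := by positivity
  calc (2 * π * s) ^ (-(d:ℝ)/2) * Real.exp (-(∑ i, (x i - μ i) ^ 2) / (2 * s))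
      ≤ (2 * π * s) ^ (-(d:ℝ)/2) * 1 := mul_le_mul_of_nonneg_left h1 h2
    _ = _ := mul_one _

lemma joint_nonneg (hq0 : ∀ v, 0 ≤ q0 v) (hB : 0 < betaBar β n) (x0 xn : Fin d → ℝ) :
    0 ≤ joint0n d β q0 n x0 xn :=
  mul_nonneg (hq0 x0) (gaussIso_nonneg' hB _ _)

lemma gauss_meas_pair (A B : ℝ) :
    Measurable (fun p : (Fin d → ℝ) × (Fin d → ℝ) =>
      gaussIso d (fun i => Real.sqrt A * p.1 i) B p.2) := by
  unfold gaussIso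
  fun_prop

lemma joint_meas (hq0_meas : Measurable q0) :
    Measurable (fun p : (Fin d → ℝ) × (Fin d → ℝ) => joint0n d β q0 n p.1 p.2) := by
  unfold joint0n
  exact (hq0_meas.comp measurable_fst).mul ((gauss_meas_pair _ _))

lemma joint_meas_x0 (hq0_meas : Measurable q0) (xn : Fin d → ℝ) :
    Measurable (fun x0 : Fin d → ℝ => joint0n d β q0 n x0 xn) :=
  (joint_meas hq0_meas).comp (measurable_id.prodMk measurable_const)

lemma q0_int (hq0_one : ∫ v, q0 v = 1) : Integrable q0 := by
  by_contra h
  rw [integral_undef h] at hq0_one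
  norm_num at hq0_one

lemma joint_weight_int (hq0_nonneg : ∀ v, 0 ≤ q0 v) (hq0_meas : Measurable q0)
    (hq0_one : ∫ v, q0 v = 1)
    (hq0_mom2 : Integrable (fun v => q0 v * ∑ i, (v i) ^ 2))
    (hB : 0 < betaBar β n) (xn : Fin d → ℝ)
    {w : (Fin d → ℝ) → ℝ} (hw_meas : Measurable w) {k1 k2 : ℝ}
    (hw : ∀ v, |w v| ≤ k1 + k2 * ∑ i, (v i) ^ 2) :
    Integrable (fun x0 => joint0n d β q0 n x0 xn * w x0) := by
  set C := (2 * π * betaBar β n) ^ (-(d:ℝ)/2) with hC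
  have hC0 : 0 ≤ C := by rw [hC]; positivity
  have hint : Integrable (fun v => C * k1 * q0 v + C * k2 * (q0 v * ∑ i, (v i) ^ 2)) :=
    ((q0_int hq0_one).const_mul (C * k1)).add (hq0_mom2.const_mul (C * k2))
  apply Integrable.mono' hint
  · exact ((joint_meas_x0 hq0_meas xn).mul hw_meas).aestronglyMeasurable
  · filter_upwards with x0
    have hj0 : 0 ≤ joint0n d β q0 n x0 xn := joint_nonneg hq0_nonneg hB x0 xn
    have hwle := hw x0
    have hw0 : (0:ℝ) ≤ k1 + k2 * ∑ i, (x0 i) ^ 2 := le_trans (abs_nonneg _) hwle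
    have hjle : joint0n d β q0 n x0 xn ≤ C * q0 x0 := by
      unfold joint0n
      calc q0 x0 * gaussIso d (fun i => Real.sqrt (alphaBar β n) * x0 i) (betaBar β n) xn
          ≤ q0 x0 * C := mul_le_mul_of_nonneg_left (gaussIso_le hB _ _) (hq0_nonneg x0)
        _ = C * q0 x0 := mul_comm _ _
    rw [Real.norm_eq_abs, abs_mul, abs_of_nonneg hj0]
    calc joint0n d β q0 n x0 xn * |w x0|
        ≤ joint0n d β q0 n x0 xn * (k1 + k2 * ∑ i, (x0 i) ^ 2) :=
          mul_le_mul_of_nonneg_left hwle hj0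
      _ ≤ (C * q0 x0) * (k1 + k2 * ∑ i, (x0 i) ^ 2) := mul_le_mul_of_nonneg_right hjle hw0
      _ = C * k1 * q0 x0 + C * k2 * (q0 x0 * ∑ i, (x0 i) ^ 2) := by ring

end JointLayer
section JointLayer2

variable {d : ℕ} {β : ℕ → ℝ} {q0 : (Fin d → ℝ) → ℝ} {n : ℕ}
variable (hq0_nonneg : ∀ v, 0 ≤ q0 v) (hq0_meas : Measurable q0)
  (hq0_one : ∫ v, q0 v = 1) (hq0_mom2 : Integrable (fun v => q0 v * ∑ i, (v i) ^ 2))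
  (hB : 0 < betaBar β n)

include hq0_nonneg hq0_meas hq0_one hq0_mom2 hB

lemma J_int (xn : Fin d → ℝ) : Integrable (fun x0 => joint0n d β q0 n x0 xn) := by
  have := joint_weight_int hq0_nonneg hq0_meas hq0_one hq0_mom2 hB xn
    (w := fun _ => 1) measurable_const (k1 := 1) (k2 := 0)
    (fun v => by simp)
  simpa using this

lemma Jx_int (xn : Fin d → ℝ) (i : Fin d) :
    Integrable (fun x0 => joint0n d β q0 n x0 xn * x0 i) := by
  refine joint_weight_int hq0_nonneg hq0_meas hq0_one hq0_mom2 hB xn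
    (measurable_pi_apply i) (k1 := 1) (k2 := 1) (fun v => ?_)
  have h1 : (v i)^2 ≤ ∑ j, (v j)^2 :=
    Finset.single_le_sum (fun j _ => sq_nonneg (v j)) (mem_univ i)
  have h2 : |v i| ≤ 1 + (v i)^2 := by nlinarith [sq_nonneg (|v i| - 1), sq_abs (v i)]
  nlinarith

lemma Jx2_int (xn : Fin d → ℝ) (i : Fin d) :
    Integrable (fun x0 => joint0n d β q0 n x0 xn * (x0 i) ^ 2) := by
  refine joint_weight_int hq0_nonneg hq0_meas hq0_one hq0_mom2 hB xn
    ((measurable_pi_apply i).pow measurable_const) (k1 := 0) (k2 := 1) (fun v => ?_)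
  have h1 : (v i)^2 ≤ ∑ j, (v j)^2 :=
    Finset.single_le_sum (fun j _ => sq_nonneg (v j)) (mem_univ i)
  rw [abs_of_nonneg (sq_nonneg _)]
  linarith

lemma Jc2_int (xn : Fin d → ℝ) (i : Fin d) (c : ℝ) :
    Integrable (fun x0 => joint0n d β q0 n x0 xn * (x0 i - c) ^ 2) := by
  refine joint_weight_int hq0_nonneg hq0_meas hq0_one hq0_mom2 hB xn
    (((measurable_pi_apply i).sub measurable_const).pow measurable_const)
    (k1 := 2 * c^2) (k2 := 2) (fun v => ?_)
  have h1 : (v i)^2 ≤ ∑ j, (v j)^2 :=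
    Finset.single_le_sum (fun j _ => sq_nonneg (v j)) (mem_univ i)
  rw [abs_of_nonneg (sq_nonneg _)]
  nlinarith [sq_nonneg (v i + c)]

lemma Jsq_int (xn : Fin d → ℝ) (c : Fin d → ℝ) :
    Integrable (fun x0 => joint0n d β q0 n x0 xn * ∑ i, (x0 i - c i) ^ 2) := by
  refine joint_weight_int hq0_nonneg hq0_meas hq0_one hq0_mom2 hB xn
    (Finset.measurable_sum _ (fun i _ =>
      ((measurable_pi_apply i).sub measurable_const).pow measurable_const))
    (k1 := 2 * ∑ i, (c i)^2) (k2 := 2) (fun v => ?_)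
  rw [abs_of_nonneg (Finset.sum_nonneg (fun i _ => sq_nonneg _))]
  have h1 : ∀ i : Fin d, (v i - c i)^2 ≤ 2 * (v i)^2 + 2 * (c i)^2 := by
    intro i; nlinarith [sq_nonneg (v i + c i)]
  calc ∑ i, (v i - c i)^2 ≤ ∑ i, (2 * (v i)^2 + 2 * (c i)^2) :=
        Finset.sum_le_sum (fun i _ => h1 i)
    _ = 2 * ∑ i, (c i)^2 + 2 * ∑ i, (v i)^2 := by
        rw [Finset.sum_add_distrib, ← Finset.mul_sum, ← Finset.mul_sum]; ring

lemma inner_sum_eq (xn : Fin d → ℝ) (c : Fin d → ℝ) :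
    ∫ x0, joint0n d β q0 n x0 xn * ∑ i, (x0 i - c i) ^ 2
      = ∑ i, ∫ x0, joint0n d β q0 n x0 xn * (x0 i - c i) ^ 2 := by
  simp_rw [Finset.mul_sum]
  exact integral_finset_sum _
    (fun i _ => Jc2_int hq0_nonneg hq0_meas hq0_one hq0_mom2 hB xn i (c i))

lemma inner_le (xn : Fin d → ℝ) (c : Fin d → ℝ) :
    ∫ x0, joint0n d β q0 n x0 xn * ∑ i, (x0 i - condMean0 d β q0 n xn i) ^ 2
      ≤ ∫ x0, joint0n d β q0 n x0 xn * ∑ i, (x0 i - c i) ^ 2 := by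
  rw [inner_sum_eq hq0_nonneg hq0_meas hq0_one hq0_mom2 hB xn _,
    inner_sum_eq hq0_nonneg hq0_meas hq0_one hq0_mom2 hB xn c]
  refine Finset.sum_le_sum (fun i _ => ?_)
  have h := varmin (fun x0 => joint0n d β q0 n x0 xn) (fun x0 => x0 i)
    (fun x0 => joint_nonneg hq0_nonneg hB x0 xn)
    (J_int hq0_nonneg hq0_meas hq0_one hq0_mom2 hB xn)
    (Jx_int hq0_nonneg hq0_meas hq0_one hq0_mom2 hB xn i)
    (Jx2_int hq0_nonneg hq0_meas hq0_one hq0_mom2 hB xn i) (c i)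
  have e : condMean0 d β q0 n xn i
      = (∫ x0, joint0n d β q0 n x0 xn * x0 i) / ∫ x0, joint0n d β q0 n x0 xn := by
    simp only [condMean0, margN]
  rw [e]
  exact h

end JointLayer2
section Outer

variable {d : ℕ} {β : ℕ → ℝ} {q0 : (Fin d → ℝ) → ℝ} {n : ℕ}

lemma EtrCov_nonneg (hq0_nonneg : ∀ v, 0 ≤ q0 v) (hB : 0 < betaBar β n) :
    0 ≤ EtrCov d β q0 n := by
  unfold EtrCov
  refine integral_nonneg (fun xn => integral_nonneg (fun x0 => ?_))
  exact mul_nonneg (joint_nonneg hq0_nonneg hB x0 xn)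
    (Finset.sum_nonneg (fun i _ => sq_nonneg _))

lemma EtrCov_le (hq0_nonneg : ∀ v, 0 ≤ q0 v) (hq0_one : ∫ v, q0 v = 1)
    (hq0_int : Integrable q0) (hB : 0 < betaBar β n)
    (h : (Fin d → ℝ) → (Fin d → ℝ) → ℝ)
    (hh_nonneg : ∀ x0 xn, 0 ≤ h x0 xn)
    (hh_meas : Measurable (fun p : (Fin d → ℝ) × (Fin d → ℝ) =>
      joint0n d β q0 n p.1 p.2 * h p.1 p.2))
    (hpt : ∀ xn, (∫ x0, joint0n d β q0 n x0 xn * ∑ i, (x0 i - condMean0 d β q0 n xn i) ^ 2)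
        ≤ ∫ x0, joint0n d β q0 n x0 xn * h x0 xn)
    (hint_x0 : ∀ xn, Integrable (fun x0 => joint0n d β q0 n x0 xn * h x0 xn))
    (hint_xn : ∀ x0, Integrable (fun xn => joint0n d β q0 n x0 xn * h x0 xn))
    (K : ℝ) (hK : 0 ≤ K)
    (hval : ∀ x0, ∫ xn, joint0n d β q0 n x0 xn * h x0 xn = q0 x0 * K) :
    EtrCov d β q0 n ≤ K := by
  set I := fun xn => ∫ x0, joint0n d β q0 n x0 xn
      * ∑ i, (x0 i - condMean0 d β q0 n xn i) ^ 2 with hI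
  have hEtr : EtrCov d β q0 n = ∫ xn, I xn := rfl
  have hI0 : ∀ xn, 0 ≤ I xn := fun xn =>
    integral_nonneg (fun x0 => mul_nonneg (joint_nonneg hq0_nonneg hB x0 xn)
      (Finset.sum_nonneg (fun i _ => sq_nonneg _)))
  by_cases hInt : Integrable I
  · have hjh0 : ∀ x0 xn, 0 ≤ joint0n d β q0 n x0 xn * h x0 xn := fun x0 xn =>
      mul_nonneg (joint_nonneg hq0_nonneg hB x0 xn) (hh_nonneg x0 xn)
    have h1 : ENNReal.ofReal (∫ xn, I xn) = ∫⁻ xn, ENNReal.ofReal (I xn) :=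
      ofReal_integral_eq_lintegral_ofReal hInt (Filter.Eventually.of_forall hI0)
    have h2 : ∀ xn, ENNReal.ofReal (I xn)
        ≤ ∫⁻ x0, ENNReal.ofReal (joint0n d β q0 n x0 xn * h x0 xn) := by
      intro xn
      refine le_trans (ENNReal.ofReal_le_ofReal (hpt xn)) (le_of_eq ?_)
      exact ofReal_integral_eq_lintegral_ofReal (hint_x0 xn)
        (Filter.Eventually.of_forall (fun x0 => hjh0 x0 xn))
    have h3 : ∫⁻ xn, ∫⁻ x0, ENNReal.ofReal (joint0n d β q0 n x0 xn * h x0 xn)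
        = ∫⁻ x0, ∫⁻ xn, ENNReal.ofReal (joint0n d β q0 n x0 xn * h x0 xn) := by
      apply lintegral_lintegral_swap
      apply Measurable.aemeasurable
      have : Measurable (fun p : (Fin d → ℝ) × (Fin d → ℝ) =>
          ENNReal.ofReal (joint0n d β q0 n p.2 p.1 * h p.2 p.1)) :=
        (hh_meas.comp measurable_swap).ennreal_ofReal
      exact this
    have h4 : ∀ x0, ∫⁻ xn, ENNReal.ofReal (joint0n d β q0 n x0 xn * h x0 xn)
        = ENNReal.ofReal (q0 x0 * K) := by
      intro x0
      rw [← ofReal_integral_eq_lintegral_ofReal (hint_xn x0)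
        (Filter.Eventually.of_forall (fun xn => hjh0 x0 xn)), hval x0]
    have h5 : ∫⁻ x0, ENNReal.ofReal (q0 x0 * K) = ENNReal.ofReal K := by
      rw [← ofReal_integral_eq_lintegral_ofReal (hq0_int.mul_const K)
        (Filter.Eventually.of_forall (fun v => mul_nonneg (hq0_nonneg v) hK)),
        integral_mul_const, hq0_one, one_mul]
    have hfinal : ENNReal.ofReal (∫ xn, I xn) ≤ ENNReal.ofReal K := by
      rw [h1]
      calc ∫⁻ xn, ENNReal.ofReal (I xn)
          ≤ ∫⁻ xn, ∫⁻ x0, ENNReal.ofReal (joint0n d β q0 n x0 xn * h x0 xn) :=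
            lintegral_mono h2
        _ = ∫⁻ x0, ∫⁻ xn, ENNReal.ofReal (joint0n d β q0 n x0 xn * h x0 xn) := h3
        _ = ∫⁻ x0, ENNReal.ofReal (q0 x0 * K) := by simp_rw [h4]
        _ = ENNReal.ofReal K := h5
    rw [hEtr]
    exact (ENNReal.ofReal_le_ofReal_iff hK).mp hfinal
  · rw [hEtr, integral_undef hInt]
    exact hK

end Outer
section Values

variable {d : ℕ} {β : ℕ → ℝ} {q0 : (Fin d → ℝ) → ℝ} {n : ℕ}

lemma sqrtA_rewrite {A : ℝ} (hA : 0 < A) (t u : ℝ) :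
    (u - t / Real.sqrt A) ^ 2 = (t - Real.sqrt A * u) ^ 2 / A := by
  have hs : (0:ℝ) < Real.sqrt A := Real.sqrt_pos.mpr hA
  have hsq : Real.sqrt A ^ 2 = A := Real.sq_sqrt hA.le
  field_simp
  nlinarith [hsq]

lemma joint_h_a_eq (hA : 0 < alphaBar β n) (x0 : Fin d → ℝ) :
    (fun xn => joint0n d β q0 n x0 xn * ∑ i, (x0 i - xn i / Real.sqrt (alphaBar β n)) ^ 2)
    = fun xn => (q0 x0 / alphaBar β n) *
        (gaussIso d (fun i => Real.sqrt (alphaBar β n) * x0 i) (betaBar β n) xn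
          * ∑ i, (xn i - Real.sqrt (alphaBar β n) * x0 i) ^ 2) := by
  funext xn
  have e1 : ∑ i, (x0 i - xn i / Real.sqrt (alphaBar β n)) ^ 2
      = (∑ i, (xn i - Real.sqrt (alphaBar β n) * x0 i) ^ 2) / alphaBar β n := by
    rw [Finset.sum_div]
    exact Finset.sum_congr rfl (fun i _ => sqrtA_rewrite hA (xn i) (x0 i))
  rw [e1]
  unfold joint0n
  field_simp

lemma hval_a (hA : 0 < alphaBar β n) (hB : 0 < betaBar β n) (x0 : Fin d → ℝ) :
    ∫ xn, joint0n d β q0 n x0 xn * ∑ i, (x0 i - xn i / Real.sqrt (alphaBar β n)) ^ 2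
      = q0 x0 * ((d : ℝ) * betaBar β n / alphaBar β n) := by
  rw [joint_h_a_eq hA x0, integral_const_mul, gaussIso_mom2 hB]
  field_simp

lemma hint_xn_a (hA : 0 < alphaBar β n) (hB : 0 < betaBar β n) (x0 : Fin d → ℝ) :
    Integrable (fun xn =>
      joint0n d β q0 n x0 xn * ∑ i, (x0 i - xn i / Real.sqrt (alphaBar β n)) ^ 2) := by
  rw [joint_h_a_eq hA x0]
  exact (gaussIso_mom2_int hB _).const_mul _

lemma hh_meas_a (hq0_meas : Measurable q0) :
    Measurable (fun p : (Fin d → ℝ) × (Fin d → ℝ) =>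
      joint0n d β q0 n p.1 p.2 * ∑ i, (p.1 i - p.2 i / Real.sqrt (alphaBar β n)) ^ 2) := by
  refine (joint_meas hq0_meas).mul ?_
  fun_prop

lemma hval_b (hB : 0 < betaBar β n) (x0 : Fin d → ℝ) (K : ℝ) :
    ∫ xn, joint0n d β q0 n x0 xn * K = q0 x0 * K := by
  unfold joint0n
  simp_rw [mul_assoc, mul_comm (gaussIso _ _ _ _) K, ← mul_assoc]
  rw [integral_const_mul, gaussIso_one hB, mul_one]

lemma hint_xn_b (hB : 0 < betaBar β n) (x0 : Fin d → ℝ) (K : ℝ) :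
    Integrable (fun xn => joint0n d β q0 n x0 xn * K) := by
  unfold joint0n
  simp_rw [mul_assoc]
  exact (((gaussIso_int hB _).mul_const K).const_mul (q0 x0))

end Values
lemma Icc_one_eq_insert {n : ℕ} (hn : 1 ≤ n) :
    Finset.Icc 1 n = insert n (Finset.Icc 1 (n - 1)) := by
  ext i
  simp only [Finset.mem_Icc, Finset.mem_insert]
  omega

lemma alphaBar_succ {β : ℕ → ℝ} {n : ℕ} (hn : 1 ≤ n) :
    alphaBar β n = (1 - β n) * alphaBar β (n - 1) := by
  unfold alphaBar
  rw [Icc_one_eq_insert hn, Finset.prod_insert (by simp; omega)]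


/-- simplified bounds of the optimal reverse variance for DDPM:
`β̃ₙ ≤ σₙ*² ≤ βₙ/αₙ`, and if the data distribution is supported in `[a,b]^d` then also
`σₙ*² ≤ β̃ₙ + (ᾱ_{n−1} βₙ²/β̄ₙ²) ((b−a)/2)²`. -/
theorem stmt_18 {d N : ℕ} (hd : 0 < d) (hN : 1 ≤ N) (β : ℕ → ℝ)
    (hβ : ∀ n ∈ Finset.Icc 1 N, β n ∈ Set.Ioo (0 : ℝ) 1)
    (q0 : (Fin d → ℝ) → ℝ)
    (hq0_nonneg : ∀ v, 0 ≤ q0 v) (hq0_meas : Measurable q0) (hq0_one : ∫ v, q0 v = 1)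
    (hq0_mom2 : Integrable (fun v => q0 v * ∑ i, (v i) ^ 2)) :
    ∀ n ∈ Finset.Icc 1 N,
      (betaTilde β n ≤ sigmaStarDDPM2 d β q0 n) ∧
      (sigmaStarDDPM2 d β q0 n ≤ β n / (1 - β n)) ∧
      (∀ a b : ℝ, (∀ v, q0 v ≠ 0 → ∀ i, v i ∈ Set.Icc a b) →
        sigmaStarDDPM2 d β q0 n ≤ betaTilde β n +
          alphaBar β (n - 1) * β n ^ 2 / betaBar β n ^ 2 * ((b - a) / 2) ^ 2) := by
  intro n hn
  rw [Finset.mem_Icc] at hn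
  obtain ⟨hn1, hnN⟩ := hn
  have hβn := hβ n (Finset.mem_Icc.mpr ⟨hn1, hnN⟩)
  obtain ⟨hβn0, hβn1⟩ := hβn
  have hβi : ∀ i ∈ Finset.Icc 1 n, 0 < β i ∧ β i < 1 := fun i hi => by
    have := hβ i (Finset.mem_Icc.mpr ⟨(Finset.mem_Icc.mp hi).1,
      le_trans (Finset.mem_Icc.mp hi).2 hnN⟩)
    exact ⟨this.1, this.2⟩
  have hβi' : ∀ i ∈ Finset.Icc 1 (n-1), 0 < β i ∧ β i < 1 := fun i hi => by
    refine hβi i (Finset.mem_Icc.mpr ⟨(Finset.mem_Icc.mp hi).1, ?_⟩)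
    have := (Finset.mem_Icc.mp hi).2
    omega
  have hA : 0 < alphaBar β n :=
    Finset.prod_pos (fun i hi => by linarith [(hβi i hi).2])
  have hA' : 0 < alphaBar β (n-1) :=
    Finset.prod_pos (fun i hi => by linarith [(hβi' i hi).2])
  have hA'le1 : alphaBar β (n-1) ≤ 1 :=
    Finset.prod_le_one (fun i hi => by linarith [(hβi' i hi).2])
      (fun i hi => by linarith [(hβi' i hi).1])
  have hArec : alphaBar β n = (1 - β n) * alphaBar β (n-1) := alphaBar_succ hn1
  have hAlt1 : alphaBar β n < 1 := by
    rw [hArec]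
    nlinarith
  have hB : 0 < betaBar β n := by unfold betaBar; linarith
  have hB' : 0 ≤ betaBar β (n-1) := by unfold betaBar; linarith
  have hBrec : betaBar β n = (1 - β n) * betaBar β (n-1) + β n := by
    unfold betaBar; rw [hArec]; ring
  have hq0_int : Integrable q0 := q0_int hq0_one
  have hE0 : 0 ≤ EtrCov d β q0 n := EtrCov_nonneg hq0_nonneg hB
  have hd' : (0:ℝ) < (d:ℝ) := Nat.cast_pos.mpr hd
  have hc0 : 0 ≤ alphaBar β (n-1) * β n ^ 2 / betaBar β n ^ 2 := by positivity
  refine ⟨?_, ?_, ?_⟩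
  · unfold sigmaStarDDPM2
    have : 0 ≤ alphaBar β (n-1) * β n ^ 2 / betaBar β n ^ 2 * (EtrCov d β q0 n / d) :=
      mul_nonneg hc0 (div_nonneg hE0 hd'.le)
    linarith
  · -- second bound
    have hEa : EtrCov d β q0 n ≤ (d:ℝ) * betaBar β n / alphaBar β n := by
      refine EtrCov_le hq0_nonneg hq0_one hq0_int hB
        (fun x0 xn => ∑ i, (x0 i - xn i / Real.sqrt (alphaBar β n)) ^ 2)
        (fun x0 xn => Finset.sum_nonneg (fun i _ => sq_nonneg _))
        (hh_meas_a hq0_meas)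
        (fun xn => inner_le hq0_nonneg hq0_meas hq0_one hq0_mom2 hB xn
          (fun i => xn i / Real.sqrt (alphaBar β n)))
        (fun xn => Jsq_int hq0_nonneg hq0_meas hq0_one hq0_mom2 hB xn
          (fun i => xn i / Real.sqrt (alphaBar β n)))
        (fun x0 => hint_xn_a hA hB x0)
        ((d:ℝ) * betaBar β n / alphaBar β n) (by positivity)
        (fun x0 => hval_a hA hB x0)
    unfold sigmaStarDDPM2
    have hstep : betaTilde β n + alphaBar β (n-1) * β n ^ 2 / betaBar β n ^ 2
        * (((d:ℝ) * betaBar β n / alphaBar β n) / d) = β n / (1 - β n) := by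
      have hcancel : (((d:ℝ) * betaBar β n / alphaBar β n) / d)
          = betaBar β n / alphaBar β n := by
        field_simp
      rw [hcancel, hArec]
      unfold betaTilde
      have h1 : (1 : ℝ) - β n ≠ 0 := by linarith
      have hX : (1 - β n) * betaBar β (n-1) + β n ≠ 0 := by rw [← hBrec]; exact ne_of_gt hB
      rw [hBrec]
      field_simp
    calc betaTilde β n + alphaBar β (n-1) * β n ^ 2 / betaBar β n ^ 2 * (EtrCov d β q0 n / d)
        ≤ betaTilde β n + alphaBar β (n-1) * β n ^ 2 / betaBar β n ^ 2
          * (((d:ℝ) * betaBar β n / alphaBar β n) / d) := by gcongr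
      _ = β n / (1 - β n) := hstep
  · -- third bound
    intro a b hsupp
    set K : ℝ := (d:ℝ) * ((b - a) / 2) ^ 2 with hK
    have hK0 : 0 ≤ K := by positivity
    have hEb : EtrCov d β q0 n ≤ K := by
      refine EtrCov_le hq0_nonneg hq0_one hq0_int hB (fun _ _ => K)
        (fun _ _ => hK0) ((joint_meas hq0_meas).mul_const K)
        (fun xn => ?_)
        (fun xn => joint_weight_int hq0_nonneg hq0_meas hq0_one hq0_mom2 hB xn
          measurable_const (k1 := |K|) (k2 := 0) (fun v => by simp))
        (fun x0 => hint_xn_b hB x0 K) K hK0 (fun x0 => hval_b hB x0 K)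
      -- pointwise bound for the constant comparison
      have step1 := inner_le hq0_nonneg hq0_meas hq0_one hq0_mom2 hB xn
        (fun _ => (a + b)/2)
      refine le_trans step1 ?_
      refine integral_mono
        (Jsq_int hq0_nonneg hq0_meas hq0_one hq0_mom2 hB xn (fun _ => (a+b)/2))
        ((J_int hq0_nonneg hq0_meas hq0_one hq0_mom2 hB xn).mul_const K)
        (fun x0 => ?_)
      by_cases hz : q0 x0 = 0
      · have : joint0n d β q0 n x0 xn = 0 := by unfold joint0n; rw [hz, zero_mul]
        simp [this]
      · have hbox := hsupp x0 hz
        have hsum : ∑ i, (x0 i - (a + b)/2) ^ 2 ≤ K := by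
          rw [hK]
          calc ∑ i, (x0 i - (a + b)/2) ^ 2 ≤ ∑ _i : Fin d, ((b - a)/2) ^ 2 := by
                refine Finset.sum_le_sum (fun i _ => ?_)
                obtain ⟨hai, hbi⟩ := hbox i
                nlinarith
            _ = (d:ℝ) * ((b - a)/2) ^ 2 := by
                rw [Finset.sum_const, Finset.card_univ, Fintype.card_fin, nsmul_eq_mul]
        exact mul_le_mul_of_nonneg_left hsum (joint_nonneg hq0_nonneg hB x0 xn)
    have hcancel : K / (d:ℝ) = ((b - a) / 2) ^ 2 := by
      rw [hK]; field_simp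
    unfold sigmaStarDDPM2
    calc betaTilde β n + alphaBar β (n-1) * β n ^ 2 / betaBar β n ^ 2 * (EtrCov d β q0 n / d)
        ≤ betaTilde β n + alphaBar β (n-1) * β n ^ 2 / betaBar β n ^ 2 * (K / d) := by gcongr
      _ = betaTilde β n + alphaBar β (n-1) * β n ^ 2 / betaBar β n ^ 2 * ((b - a) / 2) ^ 2 := by
          rw [hcancel]
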